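/- Let g : ℝ^p × ℝ^d → ℝ be continuously differentiable and fix z ∈ ℝ^d. Suppose y* : ℝ^p → ℝ^d is differentiable and, for every θ ∈ ℝ^p, y*(θ) is a global minimizer of y ↦ (1/2)‖y − z‖² + g(θ, y). Then the value function h(θ) = (1/2)‖y*(θ) − z‖² + g(θ, y*(θ)) is differentiable with ∇h(θ) = ∇_θ g(θ, y*(θ)); in particular the derivative of h does not involve the derivative of θ ↦ y*(θ). -/

import Mathlib

/-- Envelope theorem for the proximal value function: if `y*(θ)` is a global minimizer of
`y ↦ (1/2)‖y - z‖² + g(θ, y)` for every `θ`, and `y*` is differentiable, then the value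
function `h(θ) = (1/2)‖y*(θ) - z‖² + g(θ, y*(θ))` has gradient `∇_θ g(θ, y*(θ))`:
no derivative of `θ ↦ y*(θ)` appears. -/
theorem stmt_3 (p d : ℕ)
    (g : EuclideanSpace ℝ (Fin p) → EuclideanSpace ℝ (Fin d) → ℝ)
    (hg : ContDiff ℝ 1
      (fun q : EuclideanSpace ℝ (Fin p) × EuclideanSpace ℝ (Fin d) => g q.1 q.2))
    (z : EuclideanSpace ℝ (Fin d))
    (ystar : EuclideanSpace ℝ (Fin p) → EuclideanSpace ℝ (Fin d))
    (hydiff : Differentiable ℝ ystar)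
    (hmin : ∀ θ y, (1 / 2 : ℝ) * ‖ystar θ - z‖ ^ 2 + g θ (ystar θ)
      ≤ (1 / 2 : ℝ) * ‖y - z‖ ^ 2 + g θ y) :
    ∀ θ : EuclideanSpace ℝ (Fin p),
      HasGradientAt (fun θ' => (1 / 2 : ℝ) * ‖ystar θ' - z‖ ^ 2 + g θ' (ystar θ'))
        (gradient (fun θ' => g θ' (ystar θ)) θ) θ := by
  intro θ
  set y₀ : EuclideanSpace ℝ (Fin d) := ystar θ with hy₀
  -- The full objective F(θ, y)
  set F : EuclideanSpace ℝ (Fin p) × EuclideanSpace ℝ (Fin d) → ℝ := fun q => (1 / 2 : ℝ) * ‖q.2 - z‖ ^ 2 + g q.1 q.2 with hF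
  have hFdiff : Differentiable ℝ F := by
    have h1 : Differentiable ℝ (fun q : EuclideanSpace ℝ (Fin p) × EuclideanSpace ℝ (Fin d) => (1 / 2 : ℝ) * ‖q.2 - z‖ ^ 2) := by
      have h2 : ContDiff ℝ 1 (fun q : EuclideanSpace ℝ (Fin p) × EuclideanSpace ℝ (Fin d) => q.2 - z) :=
        (contDiff_snd).sub contDiff_const
      exact (contDiff_const.mul (h2.norm_sq ℝ)).differentiable one_ne_zero
    exact h1.add (hg.differentiable one_ne_zero)
  set L := fderiv ℝ F (θ, y₀) with hL
  have hLF : HasFDerivAt F L (θ, y₀) := (hFdiff (θ, y₀)).hasFDerivAt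
  -- First-order condition: the partial derivative in y vanishes
  have hinr : HasFDerivAt (fun y : EuclideanSpace ℝ (Fin d) => F (θ, y))
      (L.comp (ContinuousLinearMap.inr ℝ (EuclideanSpace ℝ (Fin p)) (EuclideanSpace ℝ (Fin d)))) y₀ := by
    have : HasFDerivAt (fun y : EuclideanSpace ℝ (Fin d) => ((θ, y) : EuclideanSpace ℝ (Fin p) × EuclideanSpace ℝ (Fin d)))
        (ContinuousLinearMap.inr ℝ (EuclideanSpace ℝ (Fin p)) (EuclideanSpace ℝ (Fin d))) y₀ := HasFDerivAt.prodMk (hasFDerivAt_const θ y₀) (hasFDerivAt_id y₀)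
    exact hLF.comp y₀ this
  have hmin' : IsLocalMin (fun y : EuclideanSpace ℝ (Fin d) => F (θ, y)) y₀ :=
    Filter.Eventually.of_forall (fun y => hmin θ y)
  have hLy : L.comp (ContinuousLinearMap.inr ℝ (EuclideanSpace ℝ (Fin p)) (EuclideanSpace ℝ (Fin d))) = 0 :=
    hmin'.hasFDerivAt_eq_zero hinr
  -- The partial derivative in θ is the fderiv of θ' ↦ g θ' y₀
  have hgθ : DifferentiableAt ℝ (fun θ' : EuclideanSpace ℝ (Fin p) => g θ' y₀) θ := by
    have h3 : DifferentiableAt ℝ (fun θ' : EuclideanSpace ℝ (Fin p) => ((θ', y₀) : EuclideanSpace ℝ (Fin p) × EuclideanSpace ℝ (Fin d))) θ :=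
      DifferentiableAt.prodMk (differentiableAt_id) (differentiableAt_const y₀)
    exact ((hg.differentiable one_ne_zero) (θ, y₀)).comp θ h3
  have hinl : HasFDerivAt (fun θ' : EuclideanSpace ℝ (Fin p) => F (θ', y₀))
      (L.comp (ContinuousLinearMap.inl ℝ (EuclideanSpace ℝ (Fin p)) (EuclideanSpace ℝ (Fin d)))) θ := by
    have : HasFDerivAt (fun θ' : EuclideanSpace ℝ (Fin p) => ((θ', y₀) : EuclideanSpace ℝ (Fin p) × EuclideanSpace ℝ (Fin d)))
        (ContinuousLinearMap.inl ℝ (EuclideanSpace ℝ (Fin p)) (EuclideanSpace ℝ (Fin d))) θ := HasFDerivAt.prodMk (hasFDerivAt_id θ) (hasFDerivAt_const y₀ θ)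
    exact hLF.comp θ this
  have hinl' : HasFDerivAt (fun θ' : EuclideanSpace ℝ (Fin p) => g θ' y₀)
      (L.comp (ContinuousLinearMap.inl ℝ (EuclideanSpace ℝ (Fin p)) (EuclideanSpace ℝ (Fin d)))) θ := by
    have heq : (fun θ' : EuclideanSpace ℝ (Fin p) => g θ' y₀)
        = fun θ' : EuclideanSpace ℝ (Fin p) => F (θ', y₀) - (1 / 2 : ℝ) * ‖y₀ - z‖ ^ 2 := by
      funext θ'; simp [hF]
    rw [heq]
    simpa using hinl.sub_const ((1 / 2 : ℝ) * ‖y₀ - z‖ ^ 2)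
  -- gradient of θ' ↦ g θ' y₀
  have hgrad : HasGradientAt (fun θ' : EuclideanSpace ℝ (Fin p) => g θ' y₀)
      (gradient (fun θ' : EuclideanSpace ℝ (Fin p) => g θ' y₀) θ) θ := hgθ.hasGradientAt
  have hD : HasFDerivAt (fun θ' : EuclideanSpace ℝ (Fin p) => g θ' y₀)
      ((InnerProductSpace.toDual ℝ (EuclideanSpace ℝ (Fin p))) (gradient (fun θ' : EuclideanSpace ℝ (Fin p) => g θ' y₀) θ)) θ :=
    hgrad.hasFDerivAt
  have hDeq : ((InnerProductSpace.toDual ℝ (EuclideanSpace ℝ (Fin p))) (gradient (fun θ' : EuclideanSpace ℝ (Fin p) => g θ' y₀) θ) :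
      EuclideanSpace ℝ (Fin p) →L[ℝ] ℝ) = L.comp (ContinuousLinearMap.inl ℝ (EuclideanSpace ℝ (Fin p)) (EuclideanSpace ℝ (Fin d))) :=
    hD.unique hinl'
  -- chain rule for h = F ∘ (θ' ↦ (θ', ystar θ'))
  have hcomp : HasFDerivAt (fun θ' : EuclideanSpace ℝ (Fin p) => F (θ', ystar θ'))
      (L.comp ((ContinuousLinearMap.id ℝ (EuclideanSpace ℝ (Fin p))).prod (fderiv ℝ ystar θ))) θ := by
    have : HasFDerivAt (fun θ' : EuclideanSpace ℝ (Fin p) => ((θ', ystar θ') : EuclideanSpace ℝ (Fin p) × EuclideanSpace ℝ (Fin d)))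
        ((ContinuousLinearMap.id ℝ (EuclideanSpace ℝ (Fin p))).prod (fderiv ℝ ystar θ)) θ :=
      HasFDerivAt.prodMk (hasFDerivAt_id θ) (hydiff θ).hasFDerivAt
    exact hLF.comp θ this
  -- the two derivatives agree
  have hkey : L.comp ((ContinuousLinearMap.id ℝ (EuclideanSpace ℝ (Fin p))).prod (fderiv ℝ ystar θ))
      = ((InnerProductSpace.toDual ℝ (EuclideanSpace ℝ (Fin p))) (gradient (fun θ' : EuclideanSpace ℝ (Fin p) => g θ' y₀) θ) : EuclideanSpace ℝ (Fin p) →L[ℝ] ℝ) := by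
    ext u
    have h1 : ((u, fderiv ℝ ystar θ u) : EuclideanSpace ℝ (Fin p) × EuclideanSpace ℝ (Fin d)) = (u, 0) + (0, fderiv ℝ ystar θ u) := by
      simp
    have h2 : L (0, fderiv ℝ ystar θ u) = 0 := by
      have := congrFun (congrArg DFunLike.coe hLy) (fderiv ℝ ystar θ u)
      simpa using this
    simp only [ContinuousLinearMap.comp_apply, ContinuousLinearMap.prod_apply,
      ContinuousLinearMap.id_apply, hDeq]
    rw [h1, map_add, h2, add_zero]
    rfl
  have hfinal : HasFDerivAt (fun θ' : EuclideanSpace ℝ (Fin p) => F (θ', ystar θ'))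
      ((InnerProductSpace.toDual ℝ (EuclideanSpace ℝ (Fin p))) (gradient (fun θ' : EuclideanSpace ℝ (Fin p) => g θ' y₀) θ)) θ := by
    rw [← hkey]; exact hcomp
  exact hasGradientAt_iff_hasFDerivAt.2 hfinal
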